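/- Let G be a connected chordal graph, v₀ ∈ V(G), and L_j = {v : d(v₀,v) = j}. If u, v ∈ L_i are adjacent in G, then either N(u) ∩ L_{i−1} ⊆ N[v] ∩ L_{i−1} or N[v] ∩ L_{i−1} ⊆ N(u) ∩ L_{i−1}. -/

import Mathlib

open SimpleGraph

section Aux
variable {V : Type*} [DecidableEq V] {G : SimpleGraph V}

lemma edge_of_length_one {a b : V} (p : G.Walk a b) (h : p.length = 1) :
    s(a, b) ∈ p.edges := by
  cases p with
  | nil => simp at h
  | cons h' q =>
    have hq : q.length = 0 := by simpa using h
    have hb := SimpleGraph.Walk.eq_of_length_eq_zero hq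
    subst hb
    simp

lemma exists_induced_path {a b : V} (w : G.Walk a b) :
    ∃ p : G.Walk a b, p.IsPath ∧ (∀ x ∈ p.support, x ∈ w.support) ∧
      ∀ x ∈ p.support, ∀ y ∈ p.support, G.Adj x y → s(x, y) ∈ p.edges := by
  suffices H : ∀ n (w : G.Walk a b), w.length ≤ n →
      ∃ p : G.Walk a b, p.IsPath ∧ (∀ x ∈ p.support, x ∈ w.support) ∧
        ∀ x ∈ p.support, ∀ y ∈ p.support, G.Adj x y → s(x, y) ∈ p.edges by
    exact H w.length w le_rfl
  intro n
  induction n using Nat.strong_induction_on with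
  | _ n ih =>
    intro w hw
    have hqp : w.bypass.IsPath := w.bypass_isPath
    set q := w.bypass with hqdef
    have hqs : ∀ x ∈ q.support, x ∈ w.support := fun x hx => w.support_bypass_subset hx
    have hql : q.length ≤ n := le_trans w.length_bypass_le hw
    by_cases hind : ∀ x ∈ q.support, ∀ y ∈ q.support, G.Adj x y → s(x, y) ∈ q.edges
    · exact ⟨q, hqp, hqs, hind⟩
    push_neg at hind
    obtain ⟨x, hx, y, hy, hadj, hne⟩ := hind
    have key2 : ∀ (x y : V), G.Adj x y → s(x, y) ∉ q.edges →
        ∀ (r1 : G.Walk a x) (r2 : G.Walk x y) (r3 : G.Walk y b),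
        q.length = r1.length + r2.length + r3.length →
        (∀ e ∈ r2.edges, e ∈ q.edges) →
        (∀ z ∈ r1.support, z ∈ q.support) → (∀ z ∈ r3.support, z ∈ q.support) →
        ∃ w' : G.Walk a b, w'.length + 1 ≤ q.length ∧ ∀ z ∈ w'.support, z ∈ q.support := by
      intro x y hadj hne r1 r2 r3 hlen hr2 hs1 hs3
      have h0 : r2.length ≠ 0 := fun h => hadj.ne (SimpleGraph.Walk.eq_of_length_eq_zero h)
      have h1 : r2.length ≠ 1 := fun h => hne (hr2 _ (edge_of_length_one r2 h))
      refine ⟨r1.append (SimpleGraph.Walk.cons hadj r3), ?_, ?_⟩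
      · rw [SimpleGraph.Walk.length_append, SimpleGraph.Walk.length_cons]
        omega
      · intro z hz
        rw [SimpleGraph.Walk.mem_support_append_iff] at hz
        rcases hz with hz | hz
        · exact hs1 _ hz
        · rw [SimpleGraph.Walk.support_cons, List.mem_cons] at hz
          rcases hz with rfl | hz
          · exact hs1 _ r1.end_mem_support
          · exact hs3 _ hz
    have hy' : y ∈ ((q.takeUntil x hx).append (q.dropUntil x hx)).support := by
      rw [q.take_spec hx]; exact hy
    rw [SimpleGraph.Walk.mem_support_append_iff] at hy'
    have hqtake : (q.takeUntil x hx).length + (q.dropUntil x hx).length = q.length := by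
      rw [← SimpleGraph.Walk.length_append, q.take_spec hx]
    obtain ⟨w', hw'l, hw's⟩ :
        ∃ w' : G.Walk a b, w'.length + 1 ≤ q.length ∧ ∀ z ∈ w'.support, z ∈ q.support := by
      rcases hy' with hyt | hyd
      · -- y comes before x: shortcut from y to x
        set t := q.takeUntil x hx with htdef
        refine key2 y x hadj.symm (by rwa [Sym2.eq_swap]) (t.takeUntil y hyt)
          (t.dropUntil y hyt) (q.dropUntil x hx) ?_ ?_ ?_ ?_
        · have h2 : (t.takeUntil y hyt).length + (t.dropUntil y hyt).length = t.length := by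
            rw [← SimpleGraph.Walk.length_append, t.take_spec hyt]
          omega
        · intro e he
          exact q.edges_takeUntil_subset hx (t.edges_dropUntil_subset hyt he)
        · intro z hz
          exact q.support_takeUntil_subset hx (t.support_takeUntil_subset hyt hz)
        · intro z hz
          exact q.support_dropUntil_subset hx hz
      · -- x comes before y
        set d := q.dropUntil x hx with hddef
        refine key2 x y hadj hne (q.takeUntil x hx) (d.takeUntil y hyd) (d.dropUntil y hyd)
          ?_ ?_ ?_ ?_
        · have h2 : (d.takeUntil y hyd).length + (d.dropUntil y hyd).length = d.length := by
            rw [← SimpleGraph.Walk.length_append, d.take_spec hyd]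
          omega
        · intro e he
          exact q.edges_dropUntil_subset hx (d.edges_takeUntil_subset hyd he)
        · intro z hz
          exact q.support_takeUntil_subset hx hz
        · intro z hz
          exact q.support_dropUntil_subset hx (d.support_dropUntil_subset hyd hz)
    obtain ⟨p, hp, hps, hpi⟩ := ih w'.length (by omega) w' le_rfl
    exact ⟨p, hp, fun z hz => hqs _ (hw's _ (hps _ hz)), hpi⟩

lemma shortest_support {v₀ c : V} (p : G.Walk v₀ c) (hp : p.length = G.dist v₀ c)
    {z : V} (hz : z ∈ p.support) : z = c ∨ G.dist v₀ z + 1 ≤ G.dist v₀ c := by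
  by_cases hzc : z = c
  · exact Or.inl hzc
  right
  have h1 : G.dist v₀ z ≤ (p.takeUntil z hz).length := SimpleGraph.dist_le _
  have h2 : 1 ≤ (p.dropUntil z hz).length := by
    by_contra h
    push_neg at h
    exact hzc (SimpleGraph.Walk.eq_of_length_eq_zero (Nat.lt_one_iff.mp h))
  have h3 : (p.takeUntil z hz).length + (p.dropUntil z hz).length = p.length := by
    rw [← SimpleGraph.Walk.length_append, p.take_spec hz]
  omega

end Aux
/-- A graph is chordal if it has no induced cycle of length at least 4. -/
def IsChordal {V : Type*} (G : SimpleGraph V) : Prop :=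
  ∀ (a : V) (c : G.Walk a a), c.IsCycle →
    (∀ u ∈ c.support, ∀ v ∈ c.support, G.Adj u v → s(u, v) ∈ c.edges) →
    c.length ≤ 3

/-- In a connected chordal graph, if `u, v` in the distance layer `L_i` from `v₀` are
adjacent, then `N(u) ∩ L_{i-1} ⊆ N[v] ∩ L_{i-1}` or `N[v] ∩ L_{i-1} ⊆ N(u) ∩ L_{i-1}`. -/
theorem stmt5 {V : Type*} [Fintype V] (G : SimpleGraph V) (hG : G.Connected)
    (hch : IsChordal G) (v₀ : V) (i : ℕ) (hi : 1 ≤ i)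
    (u v : V) (hu : G.dist v₀ u = i) (hv : G.dist v₀ v = i) (huv : G.Adj u v) :
    ({x | G.Adj u x ∧ G.dist v₀ x = i - 1} ⊆
        {x | (x = v ∨ G.Adj v x) ∧ G.dist v₀ x = i - 1}) ∨
      ({x | (x = v ∨ G.Adj v x) ∧ G.dist v₀ x = i - 1} ⊆
        {x | G.Adj u x ∧ G.dist v₀ x = i - 1}) := by
  classical
  by_contra hcon
  push_neg at hcon
  obtain ⟨h1, h2⟩ := hcon
  rw [Set.not_subset] at h1 h2
  obtain ⟨aa, haa, hna⟩ := h1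
  obtain ⟨bb, hbb, hnb⟩ := h2
  obtain ⟨hua, hda⟩ := haa
  obtain ⟨hvb0, hdb⟩ := hbb
  have hna' : ¬(aa = v ∨ G.Adj v aa) := fun h => hna ⟨h, hda⟩
  push_neg at hna'
  obtain ⟨hav, hvna⟩ := hna'
  have hnub : ¬ G.Adj u bb := fun h => hnb ⟨h, hdb⟩
  have hbv : bb ≠ v := fun h => by rw [h, hv] at hdb; omega
  have hvb : G.Adj v bb := hvb0.resolve_left hbv
  have hab : aa ≠ bb := fun h => hvna (h ▸ hvb)
  have hstep : ∀ {x y : V}, G.Adj x y → G.dist v₀ y ≤ G.dist v₀ x + 1 := by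
    intro x y h
    calc G.dist v₀ y ≤ G.dist v₀ x + G.dist x y := hG.dist_triangle
      _ ≤ G.dist v₀ x + 1 := by
          have : G.dist x y ≤ (SimpleGraph.Walk.cons h SimpleGraph.Walk.nil).length :=
            SimpleGraph.dist_le _
          simpa using this
  have hi2 : 2 ≤ i := by
    by_contra h
    have hone : i = 1 := by omega
    subst hone
    have ha0 : v₀ = aa := hG.dist_eq_zero_iff.mp (by simpa using hda)
    have hb0 : v₀ = bb := hG.dist_eq_zero_iff.mp (by simpa using hdb)
    exact hab (ha0.symm.trans hb0)
  obtain ⟨pa, hpa⟩ := hG.exists_walk_length_eq_dist v₀ aa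
  obtain ⟨pb, hpb⟩ := hG.exists_walk_length_eq_dist v₀ bb
  have hw0 : ∀ z ∈ (pa.reverse.append pb).support,
      z = aa ∨ z = bb ∨ G.dist v₀ z + 1 ≤ i - 1 := by
    intro z hz
    rw [SimpleGraph.Walk.mem_support_append_iff] at hz
    rcases hz with hz | hz
    · rw [SimpleGraph.Walk.support_reverse, List.mem_reverse] at hz
      rcases shortest_support pa hpa hz with h | h
      · exact Or.inl h
      · right; right; omega
    · rcases shortest_support pb hpb hz with h | h
      · exact Or.inr (Or.inl h)
      · right; right; omega
  obtain ⟨p, hp, hps, hpi⟩ := exists_induced_path (pa.reverse.append pb)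
  have hpd : ∀ z ∈ p.support, G.dist v₀ z ≤ i - 1 := by
    intro z hz
    rcases hw0 z (hps z hz) with rfl | rfl | h
    · omega
    · omega
    · omega
  have hup : u ∉ p.support := fun h => by have := hpd u h; omega
  have hvp : v ∉ p.support := fun h => by have := hpd v h; omega
  -- build the cycle u - v - bb - (p reversed) - aa - u
  set R : G.Walk bb u := (SimpleGraph.Walk.cons hua p).reverse with hRdef
  set Q : G.Walk v u := SimpleGraph.Walk.cons hvb R with hQdef
  set C : G.Walk u u := SimpleGraph.Walk.cons huv Q with hCdef
  have hRpath : R.IsPath := by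
    rw [hRdef, SimpleGraph.Walk.isPath_reverse_iff]
    exact hp.cons hup
  have hQpath : Q.IsPath := by
    apply hRpath.cons
    rw [hRdef, SimpleGraph.Walk.support_reverse, List.mem_reverse,
      SimpleGraph.Walk.support_cons, List.mem_cons]
    rintro (h | h)
    · exact huv.ne h.symm
    · exact hvp h
  have hCne : s(u, v) ∉ Q.edges := by
    intro h
    rw [hQdef, SimpleGraph.Walk.edges_cons, List.mem_cons] at h
    rcases h with h | h
    · rw [Sym2.eq_iff] at h
      rcases h with ⟨h1, _⟩ | ⟨h1, _⟩
      · exact huv.ne h1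
      · rw [h1] at hu; omega
    · rw [hRdef, SimpleGraph.Walk.edges_reverse, List.mem_reverse,
        SimpleGraph.Walk.edges_cons, List.mem_cons] at h
      rcases h with h | h
      · rw [Sym2.eq_iff] at h
        rcases h with ⟨_, h2⟩ | ⟨_, h2⟩
        · exact hav h2.symm
        · exact huv.ne h2.symm
      · exact hup (SimpleGraph.Walk.fst_mem_support_of_mem_edges p h)
  have hC : C.IsCycle := (SimpleGraph.Walk.cons_isCycle_iff Q huv).mpr ⟨hQpath, hCne⟩
  have hCsupp : ∀ x ∈ C.support, x = u ∨ x = v ∨ x ∈ p.support := by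
    intro x hx
    rw [hCdef, hQdef, hRdef] at hx
    simp only [SimpleGraph.Walk.support_cons, List.mem_cons,
      SimpleGraph.Walk.support_reverse, List.mem_reverse] at hx
    rcases hx with rfl | rfl | hx
    · exact Or.inl rfl
    · exact Or.inr (Or.inl rfl)
    · rcases hx with rfl | hx
      · exact Or.inl rfl
      · exact Or.inr (Or.inr hx)
  have heuv : s(u, v) ∈ C.edges := by
    rw [hCdef, SimpleGraph.Walk.edges_cons]; exact List.mem_cons_self
  have hevb : s(v, bb) ∈ C.edges := by
    rw [hCdef, hQdef]
    simp only [SimpleGraph.Walk.edges_cons, List.mem_cons]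
    tauto
  have heua : s(u, aa) ∈ C.edges := by
    rw [hCdef, hQdef, hRdef]
    simp only [SimpleGraph.Walk.edges_cons, SimpleGraph.Walk.edges_reverse, List.mem_cons,
      List.mem_reverse]
    tauto
  have hedges : ∀ e ∈ p.edges, e ∈ C.edges := by
    intro e he
    rw [hCdef, hQdef, hRdef]
    simp only [SimpleGraph.Walk.edges_cons, SimpleGraph.Walk.edges_reverse, List.mem_cons,
      List.mem_reverse]
    tauto
  have hadjU : ∀ z ∈ p.support, G.Adj u z → z = aa := by
    intro z hz h
    have h1 : G.dist v₀ u ≤ G.dist v₀ z + 1 := hstep h.symm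
    rcases hw0 z (hps z hz) with rfl | rfl | h2
    · rfl
    · exact absurd h hnub
    · omega
  have hadjV : ∀ z ∈ p.support, G.Adj v z → z = bb := by
    intro z hz h
    have h1 : G.dist v₀ v ≤ G.dist v₀ z + 1 := hstep h.symm
    rcases hw0 z (hps z hz) with rfl | rfl | h2
    · exact absurd h hvna
    · rfl
    · omega
  have hcond : ∀ x ∈ C.support, ∀ y ∈ C.support, G.Adj x y → s(x, y) ∈ C.edges := by
    intro x hx y hy hxy
    rcases hCsupp x hx with rfl | rfl | hxp
    · rcases hCsupp y hy with rfl | rfl | hyp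
      · exact absurd rfl hxy.ne
      · exact heuv
      · rw [hadjU y hyp hxy]; exact heua
    · rcases hCsupp y hy with rfl | rfl | hyp
      · rw [Sym2.eq_swap]; exact heuv
      · exact absurd rfl hxy.ne
      · rw [hadjV y hyp hxy]; exact hevb
    · rcases hCsupp y hy with rfl | rfl | hyp
      · rw [hadjU x hxp hxy.symm, Sym2.eq_swap]; exact heua
      · rw [hadjV x hxp hxy.symm, Sym2.eq_swap]; exact hevb
      · exact hedges _ (hpi x hxp y hyp hxy)
  have hlen := hch u C hC hcond
  have hplen : 1 ≤ p.length := by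
    by_contra h
    push_neg at h
    exact hab (SimpleGraph.Walk.eq_of_length_eq_zero (Nat.lt_one_iff.mp h))
  have hClen : C.length = p.length + 3 := by
    rw [hCdef, hQdef, hRdef]
    simp only [SimpleGraph.Walk.length_cons, SimpleGraph.Walk.length_reverse]
  omega
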